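/- Let (Γ^μ_{αβ}, F^μ_{αi}, D^μ_{ij}, E^i_{αβ}, B^k_{αi}, H^i_{jk}) be any real arrays satisfying the torsion-free symmetry conditions and the six metric-compatibility equations for the data (g, h, A, Dg, Dh, DA). Then these arrays are uniquely determined and are given by the explicit formulas: E^k_{αβ} = −(1/2) h^{ki} (DA_{α,iβ} + DA_{β,iα} − 2 A_{iμ} Γ^μ_{αβ}); F^μ_{αi} = (1/2) g̃^{βμ} ( −(DA_{α,iβ} − DA_{β,iα}) + h^{jk} A_{kβ} (Dh_{α,ij} − A_{lα} ε_{ijl}) ); B^k_{αi} = (1/2) h̃^{jk} ( g^{μβ} A_{jμ} (DA_{α,iβ} − DA_{β,iα}) + A_{lα} ε_{ijl} − Dh_{α,ij} ); D^μ_{ij} = (1/2) g̃^{μα} ( Dh_{α,ij} − A_{kα} h^{mk} (h_{ni} ε_{jmn} + h_{nj} ε_{imn}) ); H^l_{ik} = (1/2) h̃^{jl} ( h_{ni} ε_{kjn} + h_{nk} ε_{ijn} − A_{jμ} g^{μα} Dh_{α,ik} ) − (1/2) ε_{lik}; Γ^σ_{μν} = Γ̃^σ_{μν} + (1/2) g̃^{σρ}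 ( A_{μi}(C_{ν,ρ}{}^i − C_{ρ,ν}{}^i) + A_{νi}(C_{μ,ρ}{}^i − C_{ρ,μ}{}^i) − A_{iμ} A_{jν} h^{ik} h^{jl} Dh_{ρ,kl} ), where C_{α,β}{}^i := h^{ij} DA_{α,jβ} − A_{jβ} h^{ik} h^{jl} Dh_{α,kl}. -/

import Mathlib

lemma mul_sub_sum {ι : Type*} [Fintype ι] (a x : ℝ) (f : ι → ℝ) :
    a * (x - ∑ c, f c) = a * x - ∑ c, a * f c := by rw [mul_sub, Finset.mul_sum]

open Finset in
lemma inv_solve {ι : Type*} [Fintype ι] [DecidableEq ι] (M Minv : ι → ι → ℝ)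
    (hM : ∀ a b, ∑ c, Minv a c * M c b = if a = b then 1 else 0)
    (v w : ι → ℝ) (hv : ∀ b, ∑ c, M b c * v c = w b) (a : ι) :
    v a = ∑ b, Minv a b * w b := by
  have : ∑ b, Minv a b * w b = ∑ b, Minv a b * ∑ c, M b c * v c := by
    simp_rw [hv]
  rw [this]
  simp_rw [Finset.mul_sum, ← mul_assoc]
  rw [Finset.sum_comm]
  have : ∀ c, ∑ b, Minv a b * M b c * v c = (if a = c then 1 else 0) * v c := by
    intro c; rw [← Finset.sum_mul, hM]
  simp_rw [this, ite_mul, one_mul, zero_mul, Finset.sum_ite_eq, Finset.mem_univ, if_pos]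

open Finset in
lemma inv_symm {ι : Type*} [Fintype ι] [DecidableEq ι] (M Minv : ι → ι → ℝ)
    (hMs : ∀ a b, M a b = M b a)
    (h1 : ∀ a b, ∑ c, M a c * Minv c b = if a = b then 1 else 0)
    (h2 : ∀ a b, ∑ c, Minv a c * M c b = if a = b then 1 else 0)
    (a b : ι) : Minv a b = Minv b a := by
  clear h1
  have hMN : ∀ c d, ∑ e, M c e * Minv d e = if c = d then 1 else 0 := by
    intro c d
    have hh := h2 d c
    have : ∑ e, M c e * Minv d e = ∑ e, Minv d e * M e c := by
      apply Finset.sum_congr rfl; intro e _; rw [hMs c e]; ring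
    rw [this, hh]
    by_cases hcd : c = d <;> simp [hcd, eq_comm]
  have e1 : Minv a b = ∑ c, Minv a c * ∑ e, M c e * Minv b e := by
    simp_rw [hMN]
    simp [Finset.sum_ite_eq]
  rw [e1]
  simp_rw [Finset.mul_sum, ← mul_assoc]
  rw [Finset.sum_comm]
  have : ∀ e, ∑ c, Minv a c * M c e * Minv b e = (if a = e then 1 else 0) * Minv b e := by
    intro e; rw [← Finset.sum_mul, h2]
  simp_rw [this, ite_mul, one_mul, zero_mul, Finset.sum_ite_eq, Finset.mem_univ, if_pos]

lemma sum_rotate {ι κ σ : Type*} [Fintype ι] [Fintype κ] [Fintype σ] (f : ι → κ → σ → ℝ) :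
    ∑ a, ∑ b, ∑ c, f a b c = ∑ b, ∑ c, ∑ a, f a b c := by
  rw [Finset.sum_comm]
  exact Finset.sum_congr rfl (fun b _ => Finset.sum_comm)

lemma sum_rotate4 {ι1 ι2 ι3 ι4 : Type*} [Fintype ι1] [Fintype ι2] [Fintype ι3] [Fintype ι4]
    (f : ι1 → ι2 → ι3 → ι4 → ℝ) :
    ∑ a, ∑ b, ∑ c, ∑ d, f a b c d = ∑ b, ∑ c, ∑ d, ∑ a, f a b c d := by
  rw [sum_rotate]
  exact Finset.sum_congr rfl fun b _ => Finset.sum_congr rfl fun c _ => Finset.sum_comm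

lemma sum_rotate5 {ι1 ι2 ι3 ι4 ι5 : Type*} [Fintype ι1] [Fintype ι2] [Fintype ι3] [Fintype ι4]
    [Fintype ι5] (f : ι1 → ι2 → ι3 → ι4 → ι5 → ℝ) :
    ∑ a, ∑ b, ∑ c, ∑ d, ∑ e, f a b c d e = ∑ b, ∑ c, ∑ d, ∑ e, ∑ a, f a b c d e := by
  rw [sum_rotate]
  exact Finset.sum_congr rfl fun b _ => Finset.sum_congr rfl fun c _ => sum_rotate _

lemma sum_rotate6 {ι1 ι2 ι3 ι4 ι5 ι6 : Type*} [Fintype ι1] [Fintype ι2] [Fintype ι3] [Fintype ι4]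
    [Fintype ι5] [Fintype ι6] (f : ι1 → ι2 → ι3 → ι4 → ι5 → ι6 → ℝ) :
    ∑ a, ∑ b, ∑ c, ∑ d, ∑ e, ∑ x, f a b c d e x
      = ∑ b, ∑ c, ∑ d, ∑ e, ∑ x, ∑ a, f a b c d e x := by
  rw [sum_rotate]
  exact Finset.sum_congr rfl fun b _ => Finset.sum_congr rfl fun c _ => sum_rotate4 _

lemma sum_rotate7 {ι1 ι2 ι3 ι4 ι5 ι6 ι7 : Type*} [Fintype ι1] [Fintype ι2] [Fintype ι3]
    [Fintype ι4] [Fintype ι5] [Fintype ι6] [Fintype ι7]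
    (f : ι1 → ι2 → ι3 → ι4 → ι5 → ι6 → ι7 → ℝ) :
    ∑ a, ∑ b, ∑ c, ∑ d, ∑ e, ∑ x, ∑ y, f a b c d e x y
      = ∑ b, ∑ c, ∑ d, ∑ e, ∑ x, ∑ y, ∑ a, f a b c d e x y := by
  rw [sum_rotate]
  exact Finset.sum_congr rfl fun b _ => Finset.sum_congr rfl fun c _ => sum_rotate5 _

open Finset in
lemma contract_vec2 {ι : Type*} [Fintype ι] [DecidableEq ι] (M N : ι → ι → ℝ)
    (hMN : ∀ a b, ∑ c, M a c * N c b = if a = b then 1 else 0)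
    (v : ι → ℝ) (a : ι) :
    ∑ q, ∑ c, M a q * (N q c * v c) = v a := by
  rw [Finset.sum_comm]
  simp_rw [← mul_assoc, ← Finset.sum_mul, hMN, ite_mul, one_mul, zero_mul,
    Finset.sum_ite_eq, Finset.mem_univ, if_pos]

open Finset in
lemma contract_vec {ι : Type*} [Fintype ι] [DecidableEq ι] (M N : ι → ι → ℝ)
    (hMN : ∀ a b, ∑ c, M a c * N c b = if a = b then 1 else 0)
    (v : ι → ℝ) (b : ι) : ∑ l, ∑ j, v l * (M l j * N j b) = v b := by
  simp_rw [← Finset.mul_sum, hMN, mul_ite, mul_one, mul_zero, Finset.sum_ite_eq',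
    Finset.mem_univ, if_pos]

noncomputable section

/-- The totally antisymmetric Levi-Civita symbol on three indices with ε₀₁₂ = 1
(indices written 1,2,3 in the paper). -/
def eps (i j k : Fin 3) : ℝ :=
  ((((i : ℤ) - (j : ℤ)) * ((j : ℤ) - (k : ℤ)) * ((k : ℤ) - (i : ℤ))) / 2 : ℤ)

lemma eps_cyc (a b c : Fin 3) : eps a b c = eps b c a := by
  fin_cases a <;> fin_cases b <;> fin_cases c <;> norm_num [eps]

lemma eps_swap (a b c : Fin 3) : eps a b c = -eps a c b := by
  fin_cases a <;> fin_cases b <;> fin_cases c <;> norm_num [eps]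

lemma eps_swap13 (a b c : Fin 3) : eps a b c = -eps c b a := by
  fin_cases a <;> fin_cases b <;> fin_cases c <;> norm_num [eps]

set_option maxHeartbeats 2000000 in
/-- Any arrays `(Γ, F, D, E, B, H)` satisfying the torsion-free symmetry conditions and the
six metric-compatibility equations for the data `(g, h, A, Dg, Dh, DA)` are uniquely
determined, being given by the stated explicit formulas. -/
theorem stmt0 (n : ℕ) (hn : 1 ≤ n)
    (g ginv : Fin n → Fin n → ℝ)
    (h hinv : Fin 3 → Fin 3 → ℝ)
    (A : Fin 3 → Fin n → ℝ)
    (Dg : Fin n → Fin n → Fin n → ℝ)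
    (Dh : Fin n → Fin 3 → Fin 3 → ℝ)
    (DA : Fin n → Fin 3 → Fin n → ℝ)
    (hg_symm : ∀ μ ν, g μ ν = g ν μ)
    (hh_symm : ∀ i j, h i j = h j i)
    (hg_inv : ∀ μ ν, ∑ ρ, g μ ρ * ginv ρ ν = if μ = ν then 1 else 0)
    (hg_inv' : ∀ μ ν, ∑ ρ, ginv μ ρ * g ρ ν = if μ = ν then 1 else 0)
    (hh_inv : ∀ i j, ∑ k, h i k * hinv k j = if i = j then 1 else 0)
    (hh_inv' : ∀ i j, ∑ k, hinv i k * h k j = if i = j then 1 else 0)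
    (hDg_symm : ∀ α β γ, Dg α β γ = Dg α γ β)
    (hDh_symm : ∀ α i j, Dh α i j = Dh α j i)
    -- the effective metric g̃ and its inverse
    (gt gtinv : Fin n → Fin n → ℝ)
    (hgt : ∀ μ ν, gt μ ν = g μ ν - ∑ i, ∑ j, hinv i j * A i μ * A j ν)
    (hgt_inv : ∀ μ ν, ∑ ρ, gt μ ρ * gtinv ρ ν = if μ = ν then 1 else 0)
    (hgt_inv' : ∀ μ ν, ∑ ρ, gtinv μ ρ * gt ρ ν = if μ = ν then 1 else 0)
    -- h̃^{ij}
    (ht : Fin 3 → Fin 3 → ℝ)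
    (hht : ∀ i j, ht i j = hinv i j
        + ∑ k, ∑ l, ∑ μ, ∑ ν, hinv i k * hinv l j * gtinv μ ν * A k ν * A l μ)
    -- Dg̃ and Γ̃
    (Dgt : Fin n → Fin n → Fin n → ℝ)
    (hDgt : ∀ α μ ν, Dgt α μ ν = Dg α μ ν
        + (∑ i, ∑ j, ∑ k, ∑ l, hinv i k * hinv j l * Dh α k l * A i μ * A j ν)
        - ∑ i, ∑ j, hinv i j * (DA α i μ * A j ν + A i μ * DA α j ν))
    (Γt : Fin n → Fin n → Fin n → ℝ)
    (hΓt : ∀ σ μ ν, Γt σ μ ν = (1/2) * ∑ ρ, gtinv σ ρ * (Dgt μ ν ρ + Dgt ν μ ρ - Dgt ρ μ ν))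
    -- C_{α,β}{}^i
    (C : Fin n → Fin n → Fin 3 → ℝ)
    (hC : ∀ α β i, C α β i = (∑ j, hinv i j * DA α j β)
        - ∑ j, ∑ k, ∑ l, A j β * hinv i k * hinv j l * Dh α k l)
    -- the unknown connection coefficients
    (Γ : Fin n → Fin n → Fin n → ℝ)
    (F : Fin n → Fin n → Fin 3 → ℝ)
    (D : Fin n → Fin 3 → Fin 3 → ℝ)
    (E : Fin 3 → Fin n → Fin n → ℝ)
    (B : Fin 3 → Fin n → Fin 3 → ℝ)
    (H : Fin 3 → Fin 3 → Fin 3 → ℝ)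
    -- torsion-free symmetry conditions
    (hΓ_symm : ∀ μ α β, Γ μ α β = Γ μ β α)
    (hD_symm : ∀ μ i j, D μ i j = D μ j i)
    (hE_symm : ∀ i α β, E i α β = E i β α)
    (hH_tor : ∀ i j k, H i j k - H i k j + eps i j k = 0)
    -- the six metric-compatibility equations
    (heq1 : ∀ α β γ, Dg α β γ - (∑ μ, g μ γ * Γ μ α β) - (∑ μ, g β μ * Γ μ α γ)
        + (∑ i, A i γ * E i α β) + (∑ i, A i β * E i α γ) = 0)
    (heq2 : ∀ α i β, DA α i β - (∑ μ, A i μ * Γ μ α β) + (∑ μ, g β μ * F μ α i)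
        + (∑ k, A k β * B k α i) + (∑ k, h k i * E k α β) = 0)
    (heq3 : ∀ α β i, (∑ μ, g μ β * F μ α i) + (∑ μ, g α μ * F μ β i)
        + (∑ k, A k β * B k α i) + (∑ k, A k α * B k β i) = 0)
    (heq4 : ∀ α i j, Dh α i j + (∑ μ, A i μ * F μ α j) + (∑ μ, A j μ * F μ α i)
        + (∑ k, h k j * B k α i) + (∑ k, h i k * B k α j) = 0)
    (heq5 : ∀ α i j, (∑ μ, g μ α * D μ i j) + (∑ μ, A j μ * F μ α i)
        + (∑ k, A k α * H k i j) + (∑ k, h j k * B k α i) = 0)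
    (heq6 : ∀ i j k, (∑ μ, A j μ * D μ i k) + (∑ μ, A k μ * D μ i j)
        + (∑ l, h l k * H l i j) + (∑ l, h l j * H l i k) = 0) :
    -- the unique explicit solution
    (∀ k α β, E k α β = -(1/2) * ∑ i, hinv k i *
        (DA α i β + DA β i α - 2 * ∑ μ, A i μ * Γ μ α β)) ∧
    (∀ μ' α i, F μ' α i = (1/2) * ∑ β, gtinv β μ' *
        (-(DA α i β - DA β i α)
          + ∑ j, ∑ k, hinv j k * A k β * (Dh α i j - ∑ l, A l α * eps i j l))) ∧
    (∀ k α i, B k α i = (1/2) * ∑ j, ht j k *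
        ((∑ μ, ∑ β, ginv μ β * A j μ * (DA α i β - DA β i α))
          + (∑ l, A l α * eps i j l) - Dh α i j)) ∧
    (∀ μ' i j, D μ' i j = (1/2) * ∑ α, gtinv μ' α *
        (Dh α i j - ∑ k, ∑ m, A k α * hinv m k *
            ((∑ n', h n' i * eps j m n') + ∑ n', h n' j * eps i m n'))) ∧
    (∀ l' i k, H l' i k = (1/2) * (∑ j, ht j l' *
        ((∑ n', h n' i * eps k j n') + (∑ n', h n' k * eps i j n')
          - ∑ μ, ∑ α, A j μ * ginv μ α * Dh α i k)) - (1/2) * eps l' i k) ∧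
    (∀ σ μ ν, Γ σ μ ν = Γt σ μ ν + (1/2) * ∑ ρ, gtinv σ ρ *
        ((∑ i, A i μ * (C ν ρ i - C ρ ν i)) + (∑ i, A i ν * (C μ ρ i - C ρ μ i))
          - ∑ i, ∑ j, ∑ k, ∑ l, A i μ * A j ν * hinv i k * hinv j l * Dh ρ k l)) := by
  have hhinv_symm : ∀ i j, hinv i j = hinv j i := inv_symm h hinv hh_symm hh_inv hh_inv'
  have hginv_symm : ∀ μ ν, ginv μ ν = ginv ν μ := inv_symm g ginv hg_symm hg_inv hg_inv'
  have hgt_symm : ∀ μ ν, gt μ ν = gt ν μ := by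
    intro μ ν
    rw [hgt, hgt, hg_symm μ ν]
    congr 1
    rw [Finset.sum_comm]
    apply Finset.sum_congr rfl; intro x _
    apply Finset.sum_congr rfl; intro y _
    rw [hhinv_symm y x]; ring
  have hgtinv_symm : ∀ μ ν, gtinv μ ν = gtinv ν μ :=
    inv_symm gt gtinv hgt_symm hgt_inv hgt_inv'
  have hht_symm : ∀ i j, ht i j = ht j i := by
    intro i j
    rw [hht, hht, hhinv_symm i j]
    congr 1
    rw [Finset.sum_comm]
    apply Finset.sum_congr rfl; intro x _
    apply Finset.sum_congr rfl; intro y _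
    rw [Finset.sum_comm]
    apply Finset.sum_congr rfl; intro a _
    apply Finset.sum_congr rfl; intro b _
    rw [hhinv_symm i y, hhinv_symm x j, hgtinv_symm b a]; ring
  -- the E formula
  have hEc : ∀ k α β, E k α β = -(1/2) * ∑ i, hinv k i *
      (DA α i β + DA β i α - 2 * ∑ μ, A i μ * Γ μ α β) := by
    intro k α β
    have key : ∀ i0, ∑ c, h i0 c * E c α β
        = -(1/2) * (DA α i0 β + DA β i0 α - 2 * ∑ μ, A i0 μ * Γ μ α β) := by
      intro i0
      have h2a := heq2 α i0 β
      have h2b := heq2 β i0 α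
      have h3 := heq3 α β i0
      have e1 : ∑ μ, A i0 μ * Γ μ β α = ∑ μ, A i0 μ * Γ μ α β :=
        Finset.sum_congr rfl (fun μ _ => by rw [hΓ_symm])
      have e2 : ∑ c, h c i0 * E c β α = ∑ c, h i0 c * E c α β :=
        Finset.sum_congr rfl (fun c _ => by rw [hh_symm, hE_symm])
      have e3 : ∑ c, h c i0 * E c α β = ∑ c, h i0 c * E c α β :=
        Finset.sum_congr rfl (fun c _ => by rw [hh_symm])
      have e4 : ∑ μ, g μ β * F μ α i0 = ∑ μ, g β μ * F μ α i0 :=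
        Finset.sum_congr rfl (fun μ _ => by rw [hg_symm])
      rw [e1, e2] at h2b
      rw [e3] at h2a
      rw [e4] at h3
      linarith
    have := inv_solve h hinv hh_inv' (fun c => E c α β)
      (fun i0 => -(1/2) * (DA α i0 β + DA β i0 α - 2 * ∑ μ, A i0 μ * Γ μ α β)) key k
    rw [this, Finset.mul_sum]
    apply Finset.sum_congr rfl; intro x _; ring
  -- the antisymmetrised equation (I):  g·F + A·B = -(1/2)(DA - DA)
  have hP : ∀ α β i, (∑ μ, g β μ * F μ α i) + (∑ k, A k β * B k α i)
      = -(1/2) * (DA α i β - DA β i α) := by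
    intro α β i
    have h2a := heq2 α i β
    have h2b := heq2 β i α
    have h3 := heq3 α β i
    have e1 : ∑ μ, A i μ * Γ μ β α = ∑ μ, A i μ * Γ μ α β :=
      Finset.sum_congr rfl (fun μ _ => by rw [hΓ_symm])
    have e2 : ∑ c, h c i * E c β α = ∑ c, h c i * E c α β :=
      Finset.sum_congr rfl (fun c _ => by rw [hE_symm])
    have e4 : ∑ μ, g μ β * F μ α i = ∑ μ, g β μ * F μ α i :=
      Finset.sum_congr rfl (fun μ _ => by rw [hg_symm])
    rw [e1, e2] at h2b
    rw [e4] at h3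
    linarith
  -- equation (Q):  A·F + h·B = (1/2)(∑ A ε - Dh)
  have hQ : ∀ α i j, (∑ μ, A j μ * F μ α i) + (∑ k, h j k * B k α i)
      = (1/2) * ((∑ l, A l α * eps l i j) - Dh α i j) := by
    intro α i j
    have h4 := heq4 α i j
    have h5a := heq5 α i j
    have h5b := heq5 α j i
    have e1 : ∑ μ, g μ α * D μ j i = ∑ μ, g μ α * D μ i j :=
      Finset.sum_congr rfl (fun μ _ => by rw [hD_symm])
    have e2 : ∑ c, A c α * H c j i
        = (∑ c, A c α * H c i j) + ∑ c, A c α * eps c i j := by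
      rw [← Finset.sum_add_distrib]
      apply Finset.sum_congr rfl; intro c _
      linear_combination (-(A c α)) * hH_tor c i j
    rw [e1, e2] at h5b
    have e3 : ∑ c, h c j * B c α i = ∑ c, h j c * B c α i :=
      Finset.sum_congr rfl (fun c _ => by rw [hh_symm])
    have e5 : ∑ c, h i c * B c α j = ∑ c, h i c * B c α j := rfl
    rw [e3] at h4
    linarith
  -- the F formula
  have hFc : ∀ μ' α i, F μ' α i = (1/2) * ∑ β, gtinv β μ' *
      (-(DA α i β - DA β i α)
        + ∑ j, ∑ k, hinv j k * A k β * (Dh α i j - ∑ l, A l α * eps i j l)) := by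
    intro μ' α i
    have heF : ∀ q, ∑ m, A q m * F m α i
        = (1/2) * ((∑ l, A l α * eps l i q) - Dh α i q) - ∑ c, h q c * B c α i := by
      intro q; linarith [hQ α i q]
    have hgF : ∀ β, ∑ m, g β m * F m α i
        = -(1/2) * (DA α i β - DA β i α) - ∑ c, A c β * B c α i := by
      intro β; linarith [hP α β i]
    have hcon : ∀ β, ∑ m, gt β m * F m α i = (1/2) * (-(DA α i β - DA β i α)
        + ∑ j, ∑ k0, hinv j k0 * A k0 β * (Dh α i j - ∑ l, A l α * eps i j l)) := by
      intro β
      have e1 : ∀ m, gt β m * F m α i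
          = g β m * F m α i - ∑ p, ∑ q, hinv p q * A p β * (A q m * F m α i) := by
        intro m
        rw [hgt, sub_mul, Finset.sum_mul]
        congr 1
        apply Finset.sum_congr rfl; intro p _
        rw [Finset.sum_mul]
        apply Finset.sum_congr rfl; intro q _
        ring
      have e2 : ∑ m, gt β m * F m α i
          = (∑ m, g β m * F m α i)
            - ∑ p, ∑ q, hinv p q * A p β * (∑ m, A q m * F m α i) := by
        calc ∑ m, gt β m * F m α i
            = ∑ m, (g β m * F m α i - ∑ p, ∑ q, hinv p q * A p β * (A q m * F m α i)) :=
              Finset.sum_congr rfl (fun m _ => e1 m)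
          _ = (∑ m, g β m * F m α i)
              - ∑ m, ∑ p, ∑ q, hinv p q * A p β * (A q m * F m α i) :=
              Finset.sum_sub_distrib _ _
          _ = (∑ m, g β m * F m α i)
              - ∑ p, ∑ q, ∑ m, hinv p q * A p β * (A q m * F m α i) := by
              rw [sum_rotate]
          _ = (∑ m, g β m * F m α i)
              - ∑ p, ∑ q, hinv p q * A p β * (∑ m, A q m * F m α i) := by
              congr 1
              apply Finset.sum_congr rfl; intro p _
              apply Finset.sum_congr rfl; intro q _
              rw [Finset.mul_sum]
      rw [e2, hgF β]
      have e3 : ∑ p, ∑ q, hinv p q * A p β * (∑ m, A q m * F m α i)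
          = (∑ p, ∑ q, hinv p q * A p β * ((1/2) * ((∑ l, A l α * eps l i q) - Dh α i q)))
            - ∑ p, ∑ q, hinv p q * A p β * (∑ c, h q c * B c α i) := by
        rw [← Finset.sum_sub_distrib]
        apply Finset.sum_congr rfl; intro p _
        rw [← Finset.sum_sub_distrib]
        apply Finset.sum_congr rfl; intro q _
        rw [heF q]; ring
      rw [e3]
      have e4 : ∑ p, ∑ q, hinv p q * A p β * (∑ c, h q c * B c α i)
          = ∑ c, A c β * B c α i := by
        have ptw : ∀ p, ∑ q, hinv p q * A p β * (∑ c, h q c * B c α i)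
            = A p β * ∑ q, ∑ c, hinv p q * (h q c * B c α i) := by
          intro p
          rw [Finset.mul_sum]
          apply Finset.sum_congr rfl; intro q _
          rw [Finset.mul_sum, Finset.mul_sum]
          apply Finset.sum_congr rfl; intro c _
          ring
        calc ∑ p, ∑ q, hinv p q * A p β * (∑ c, h q c * B c α i)
            = ∑ p, A p β * ∑ q, ∑ c, hinv p q * (h q c * B c α i) :=
              Finset.sum_congr rfl (fun p _ => ptw p)
          _ = ∑ p, A p β * B p α i := by
              apply Finset.sum_congr rfl; intro p _
              rw [contract_vec2 hinv h hh_inv' (fun c => B c α i) p]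
      rw [e4]
      have e5 : ∑ p, ∑ q, hinv p q * A p β * ((1/2) * ((∑ l, A l α * eps l i q) - Dh α i q))
          = -(1/2) * ∑ j, ∑ k0, hinv j k0 * A k0 β * (Dh α i j - ∑ l, A l α * eps i j l) := by
        rw [Finset.sum_comm, Finset.mul_sum]
        apply Finset.sum_congr rfl; intro j _
        rw [Finset.mul_sum]
        apply Finset.sum_congr rfl; intro k0 _
        rw [hhinv_symm k0 j]
        have : ∑ l, A l α * eps l i j = ∑ l, A l α * eps i j l :=
          Finset.sum_congr rfl (fun l _ => by rw [eps_cyc l i j])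
        rw [this]; ring
      rw [e5]; ring
    rw [inv_solve gt gtinv hgt_inv' (fun m => F m α i) _ hcon μ', Finset.mul_sum]
    apply Finset.sum_congr rfl; intro β _
    rw [hgtinv_symm μ' β]
    ring
  -- Woodbury identity
  have hAA' : ∀ σ μ, ∑ j, ∑ l, A l μ * (hinv l j * A j σ) = g σ μ - gt σ μ := by
    intro σ μ
    rw [hgt, sub_sub_cancel]
    apply Finset.sum_congr rfl; intro x _
    apply Finset.sum_congr rfl; intro y _
    rw [hhinv_symm y x]; ring
  have hwood : ∀ i k, ∑ j, ht i j * (h j k - ∑ μ, ∑ β, A j μ * ginv μ β * A k β)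
      = if i = k then 1 else 0 := by
    intro i k
    have split : ∑ j, ht i j * (h j k - ∑ μ, ∑ β, A j μ * ginv μ β * A k β)
        = (∑ j, hinv i j * h j k)
          - (∑ j, hinv i j * (∑ μ, ∑ β, A j μ * ginv μ β * A k β))
          + ((∑ j, (∑ p, ∑ l, ∑ μ, ∑ ν, hinv i p * hinv l j * gtinv μ ν * A p ν * A l μ) * h j k)
          - (∑ j, (∑ p, ∑ l, ∑ μ, ∑ ν, hinv i p * hinv l j * gtinv μ ν * A p ν * A l μ)
               * (∑ μ, ∑ β, A j μ * ginv μ β * A k β))) := by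
      rw [← Finset.sum_sub_distrib, ← Finset.sum_sub_distrib, ← Finset.sum_add_distrib]
      apply Finset.sum_congr rfl; intro j _
      rw [hht]; ring
    rw [split, hh_inv' i k]
    -- canonical form of S2
    have c2 : ∑ j, hinv i j * (∑ μ, ∑ β, A j μ * ginv μ β * A k β)
        = ∑ p, ∑ ν, ∑ β, hinv i p * A p ν * (ginv ν β * A k β) := by
      apply Finset.sum_congr rfl; intro p _
      rw [Finset.mul_sum]
      apply Finset.sum_congr rfl; intro ν _
      rw [Finset.mul_sum]
      apply Finset.sum_congr rfl; intro β _
      ring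
    -- canonical form of S3
    have c3 : ∑ j, (∑ p, ∑ l, ∑ μ, ∑ ν, hinv i p * hinv l j * gtinv μ ν * A p ν * A l μ) * h j k
        = ∑ p, ∑ μ, ∑ ν, hinv i p * gtinv μ ν * A p ν * A k μ := by
      have e1 : ∀ j, (∑ p, ∑ l, ∑ μ, ∑ ν, hinv i p * hinv l j * gtinv μ ν * A p ν * A l μ) * h j k
          = ∑ p, ∑ l, ∑ μ, ∑ ν, (hinv i p * gtinv μ ν * A p ν * A l μ) * (hinv l j * h j k) := by
        intro j
        rw [Finset.sum_mul]; apply Finset.sum_congr rfl; intro p _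
        rw [Finset.sum_mul]; apply Finset.sum_congr rfl; intro l _
        rw [Finset.sum_mul]; apply Finset.sum_congr rfl; intro μ _
        rw [Finset.sum_mul]; apply Finset.sum_congr rfl; intro ν _
        ring
      calc ∑ j, (∑ p, ∑ l, ∑ μ, ∑ ν, hinv i p * hinv l j * gtinv μ ν * A p ν * A l μ) * h j k
          = ∑ j, ∑ p, ∑ l, ∑ μ, ∑ ν,
              (hinv i p * gtinv μ ν * A p ν * A l μ) * (hinv l j * h j k) :=
            Finset.sum_congr rfl (fun j _ => e1 j)
        _ = ∑ p, ∑ l, ∑ μ, ∑ ν, ∑ j,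
              (hinv i p * gtinv μ ν * A p ν * A l μ) * (hinv l j * h j k) := sum_rotate5 _
        _ = ∑ p, ∑ l, ∑ μ, ∑ ν,
              (hinv i p * gtinv μ ν * A p ν * A l μ) * (if l = k then 1 else 0) := by
            apply Finset.sum_congr rfl; intro p _
            apply Finset.sum_congr rfl; intro l _
            apply Finset.sum_congr rfl; intro μ _
            apply Finset.sum_congr rfl; intro ν _
            rw [← Finset.mul_sum, hh_inv' l k]
        _ = ∑ p, ∑ μ, ∑ ν, hinv i p * gtinv μ ν * A p ν * A k μ := by
            apply Finset.sum_congr rfl; intro p _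
            rw [Finset.sum_comm]
            apply Finset.sum_congr rfl; intro μ _
            rw [Finset.sum_comm]
            apply Finset.sum_congr rfl; intro ν _
            simp
    -- canonical form of S4
    have c4 : ∑ j, (∑ p, ∑ l, ∑ μ, ∑ ν, hinv i p * hinv l j * gtinv μ ν * A p ν * A l μ)
          * (∑ μ, ∑ β, A j μ * ginv μ β * A k β)
        = (∑ p, ∑ μ, ∑ ν, hinv i p * gtinv μ ν * A p ν * A k μ)
          - ∑ p, ∑ ν, ∑ β, hinv i p * A p ν * (ginv ν β * A k β) := by
      have e1 : ∀ j, (∑ p, ∑ l, ∑ μ, ∑ ν, hinv i p * hinv l j * gtinv μ ν * A p ν * A l μ)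
            * (∑ μ, ∑ β, A j μ * ginv μ β * A k β)
          = ∑ p, ∑ l, ∑ μ, ∑ ν, ∑ σ, ∑ β,
              (hinv i p * gtinv μ ν * A p ν * (ginv σ β * A k β))
                * (A l μ * (hinv l j * A j σ)) := by
        intro j
        rw [Finset.sum_mul]; apply Finset.sum_congr rfl; intro p _
        rw [Finset.sum_mul]; apply Finset.sum_congr rfl; intro l _
        rw [Finset.sum_mul]; apply Finset.sum_congr rfl; intro μ _
        rw [Finset.sum_mul]; apply Finset.sum_congr rfl; intro ν _
        rw [Finset.mul_sum]; apply Finset.sum_congr rfl; intro σ _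
        rw [Finset.mul_sum]; apply Finset.sum_congr rfl; intro β _
        ring
      calc ∑ j, (∑ p, ∑ l, ∑ μ, ∑ ν, hinv i p * hinv l j * gtinv μ ν * A p ν * A l μ)
            * (∑ μ, ∑ β, A j μ * ginv μ β * A k β)
          = ∑ j, ∑ p, ∑ l, ∑ μ, ∑ ν, ∑ σ, ∑ β,
              (hinv i p * gtinv μ ν * A p ν * (ginv σ β * A k β))
                * (A l μ * (hinv l j * A j σ)) :=
            Finset.sum_congr rfl (fun j _ => e1 j)
        _ = ∑ p, ∑ l, ∑ μ, ∑ ν, ∑ σ, ∑ β, ∑ j,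
              (hinv i p * gtinv μ ν * A p ν * (ginv σ β * A k β))
                * (A l μ * (hinv l j * A j σ)) := sum_rotate7 _
        _ = ∑ p, ∑ μ, ∑ ν, ∑ σ, ∑ β, ∑ j, ∑ l,
              (hinv i p * gtinv μ ν * A p ν * (ginv σ β * A k β))
                * (A l μ * (hinv l j * A j σ)) := by
            apply Finset.sum_congr rfl; intro p _
            rw [sum_rotate6]
        _ = ∑ p, ∑ μ, ∑ ν, ∑ σ, ∑ β,
              (hinv i p * gtinv μ ν * A p ν * (ginv σ β * A k β)) * (g σ μ - gt σ μ) := by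
            apply Finset.sum_congr rfl; intro p _
            apply Finset.sum_congr rfl; intro μ _
            apply Finset.sum_congr rfl; intro ν _
            apply Finset.sum_congr rfl; intro σ _
            apply Finset.sum_congr rfl; intro β _
            simp_rw [← Finset.mul_sum]
            rw [hAA' σ μ]
        _ = (∑ p, ∑ μ, ∑ ν, ∑ σ, ∑ β,
              hinv i p * gtinv μ ν * A p ν * (ginv σ β * A k β) * g σ μ)
            - ∑ p, ∑ μ, ∑ ν, ∑ σ, ∑ β,
              hinv i p * gtinv μ ν * A p ν * (ginv σ β * A k β) * gt σ μ := by
            simp only [mul_sub, Finset.sum_sub_distrib]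
        _ = (∑ p, ∑ μ, ∑ ν, hinv i p * gtinv μ ν * A p ν * A k μ)
            - ∑ p, ∑ ν, ∑ β, hinv i p * A p ν * (ginv ν β * A k β) := by
            congr 1
            · -- g part
              apply Finset.sum_congr rfl; intro p _
              apply Finset.sum_congr rfl; intro μ _
              apply Finset.sum_congr rfl; intro ν _
              -- ∑ σ, ∑ β, c * (ginv σ β * A k β) * g σ μ = c * A k μ
              rw [Finset.sum_comm]
              have e2 : ∀ β, ∑ σ, hinv i p * gtinv μ ν * A p ν * (ginv σ β * A k β) * g σ μ
                  = (hinv i p * gtinv μ ν * A p ν * A k β) * (if β = μ then 1 else 0) := by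
                intro β
                have e3 : ∀ σ, hinv i p * gtinv μ ν * A p ν * (ginv σ β * A k β) * g σ μ
                    = (hinv i p * gtinv μ ν * A p ν * A k β) * (ginv β σ * g σ μ) := by
                  intro σ; rw [hginv_symm σ β]; ring
                rw [Finset.sum_congr rfl (fun σ _ => e3 σ), ← Finset.mul_sum, hg_inv' β μ]
              rw [Finset.sum_congr rfl (fun β _ => e2 β)]
              simp
            · -- gt part
              apply Finset.sum_congr rfl; intro p _
              rw [sum_rotate4]
              -- order now ν σ β μ
              apply Finset.sum_congr rfl; intro ν _
              have e2 : ∀ σ, ∑ β, ∑ μ, hinv i p * gtinv μ ν * A p ν * (ginv σ β * A k β) * gt σ μ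
                  = (∑ β, hinv i p * A p ν * (ginv σ β * A k β)) * (if ν = σ then 1 else 0) := by
                intro σ
                rw [Finset.sum_mul]
                apply Finset.sum_congr rfl; intro β _
                have e3 : ∀ μ, hinv i p * gtinv μ ν * A p ν * (ginv σ β * A k β) * gt σ μ
                    = (hinv i p * A p ν * (ginv σ β * A k β)) * (gtinv ν μ * gt μ σ) := by
                  intro μ; rw [hgtinv_symm μ ν, hgt_symm σ μ]; ring
                rw [Finset.sum_congr rfl (fun μ _ => e3 μ), ← Finset.mul_sum, hgt_inv' ν σ]
              rw [Finset.sum_congr rfl (fun σ _ => e2 σ)]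
              simp
    rw [c2, c3, c4]
    ring
  -- the B formula
  have hBc : ∀ k α i, B k α i = (1/2) * ∑ j, ht j k *
      ((∑ μ, ∑ β, ginv μ β * A j μ * (DA α i β - DA β i α))
        + (∑ l, A l α * eps i j l) - Dh α i j) := by
    intro k0 α i
    have hFg : ∀ ν, F ν α i = ∑ β, ginv ν β *
        (-(1/2) * (DA α i β - DA β i α) - ∑ c, A c β * B c α i) := by
      intro ν
      exact inv_solve g ginv hg_inv' (fun m => F m α i)
        (fun β => -(1/2) * (DA α i β - DA β i α) - ∑ c, A c β * B c α i)
        (fun β => by linarith [hP α β i]) ν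
    have hconB : ∀ m, ∑ c, (h m c - ∑ μ, ∑ β, A m μ * ginv μ β * A c β) * B c α i
        = (1/2) * ((∑ μ, ∑ β, ginv μ β * A m μ * (DA α i β - DA β i α))
            + (∑ l, A l α * eps i m l) - Dh α i m) := by
      intro m
      have hQm := hQ α i m
      have eT : ∑ μ, A m μ * F μ α i
          = (∑ μ, ∑ β, A m μ * (ginv μ β * (-(1/2) * (DA α i β - DA β i α))))
            - ∑ μ, ∑ β, ∑ c, A m μ * (ginv μ β * (A c β * B c α i)) := by
        rw [← Finset.sum_sub_distrib]
        apply Finset.sum_congr rfl; intro μ _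
        rw [hFg μ, ← Finset.sum_sub_distrib, Finset.mul_sum]
        apply Finset.sum_congr rfl; intro β _
        rw [mul_sub_sum, mul_sub_sum]
      have eS2 : ∑ μ, ∑ β, ∑ c, A m μ * (ginv μ β * (A c β * B c α i))
          = ∑ c, (∑ μ, ∑ β, A m μ * ginv μ β * A c β) * B c α i := by
        rw [sum_rotate, sum_rotate]
        apply Finset.sum_congr rfl; intro c _
        rw [Finset.sum_mul]
        apply Finset.sum_congr rfl; intro μ _
        rw [Finset.sum_mul]
        apply Finset.sum_congr rfl; intro β _
        ring
      have eA : ∑ μ, ∑ β, A m μ * (ginv μ β * (-(1/2) * (DA α i β - DA β i α)))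
          = -(1/2) * ∑ μ, ∑ β, ginv μ β * A m μ * (DA α i β - DA β i α) := by
        rw [Finset.mul_sum]
        apply Finset.sum_congr rfl; intro μ _
        rw [Finset.mul_sum]
        apply Finset.sum_congr rfl; intro β _
        ring
      have eeps : ∑ l, A l α * eps l i m = ∑ l, A l α * eps i m l :=
        Finset.sum_congr rfl (fun l _ => by rw [eps_cyc l i m])
      have lsplit : ∑ c, (h m c - ∑ μ, ∑ β, A m μ * ginv μ β * A c β) * B c α i
          = (∑ c, h m c * B c α i)
            - ∑ c, (∑ μ, ∑ β, A m μ * ginv μ β * A c β) * B c α i := by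
        rw [← Finset.sum_sub_distrib]
        apply Finset.sum_congr rfl; intro c _
        ring
      rw [lsplit]
      linarith [hQm, eT, eS2, eA, eeps]
    have key := inv_solve (fun m c => h m c - ∑ μ, ∑ β, A m μ * ginv μ β * A c β) ht hwood
      (fun c => B c α i)
      (fun m => (1/2) * ((∑ μ, ∑ β, ginv μ β * A m μ * (DA α i β - DA β i α))
          + (∑ l, A l α * eps i m l) - Dh α i m)) hconB k0
    rw [key, Finset.mul_sum]
    apply Finset.sum_congr rfl; intro m _
    rw [hht_symm k0 m]
    ring
  -- equation (V): g·D + A·H = (1/2)(Dh - ∑ A ε)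
  have hV : ∀ α i j, (∑ μ, g μ α * D μ i j) + (∑ k, A k α * H k i j)
      = (1/2) * (Dh α i j - ∑ l, A l α * eps l i j) := by
    intro α i j
    linarith [heq5 α i j, hQ α i j]
  -- equation (R): A·D + h·H = R
  have hR : ∀ m i k, (∑ μ, A m μ * D μ i k) + (∑ l, h m l * H l i k)
      = -(1/2) * ((∑ l, h m l * eps l i k) - (∑ l, h i l * eps l k m)
          + (∑ l, h k l * eps l m i)) := by
    have hasym : ∀ a b c, ((∑ μ, A a μ * D μ b c) + (∑ l, h a l * H l b c))
        + ((∑ μ, A c μ * D μ b a) + (∑ l, h c l * H l b a)) = 0 := by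
      intro a b c
      have h6 := heq6 b a c
      have e1 : ∑ l, h l c * H l b a = ∑ l, h c l * H l b a :=
        Finset.sum_congr rfl (fun l _ => by rw [hh_symm])
      have e2 : ∑ l, h l a * H l b c = ∑ l, h a l * H l b c :=
        Finset.sum_congr rfl (fun l _ => by rw [hh_symm])
      linarith
    have htor : ∀ a b c, ((∑ μ, A a μ * D μ b c) + (∑ l, h a l * H l b c))
        - ((∑ μ, A a μ * D μ c b) + (∑ l, h a l * H l c b))
        = - ∑ l, h a l * eps l b c := by
      intro a b c
      have e1 : ∑ μ, A a μ * D μ c b = ∑ μ, A a μ * D μ b c :=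
        Finset.sum_congr rfl (fun μ _ => by rw [hD_symm])
      have e2 : (∑ l, h a l * H l b c) - (∑ l, h a l * H l c b)
          = - ∑ l, h a l * eps l b c := by
        rw [← Finset.sum_sub_distrib, ← Finset.sum_neg_distrib]
        apply Finset.sum_congr rfl; intro l _
        linear_combination (h a l) * hH_tor l b c
      linarith
    intro m i k
    linarith [htor m i k, hasym m k i, htor i k m, hasym i m k, htor k m i, hasym k i m]
  -- the D formula
  have hDc : ∀ μ' i j, D μ' i j = (1/2) * ∑ α, gtinv μ' α *
      (Dh α i j - ∑ k, ∑ m, A k α * hinv m k *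
          ((∑ n', h n' i * eps j m n') + ∑ n', h n' j * eps i m n')) := by
    intro μ' i j
    have heD : ∀ q, ∑ m, A q m * D m i j
        = -(1/2) * ((∑ l, h q l * eps l i j) - (∑ l, h i l * eps l j q)
            + (∑ l, h j l * eps l q i))
          - ∑ c, h q c * H c i j := by
      intro q; linarith [hR q i j]
    have hgD : ∀ β, ∑ m, g β m * D m i j
        = (1/2) * (Dh β i j - ∑ l, A l β * eps l i j) - ∑ c, A c β * H c i j := by
      intro β
      have e : ∑ μ, g μ β * D μ i j = ∑ μ, g β μ * D μ i j :=
        Finset.sum_congr rfl (fun μ _ => by rw [hg_symm])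
      linarith [hV β i j]
    have hcon : ∀ β, ∑ m, gt β m * D m i j
        = (1/2) * (Dh β i j - ∑ k, ∑ m0, A k β * hinv m0 k *
            ((∑ n', h n' i * eps j m0 n') + ∑ n', h n' j * eps i m0 n')) := by
      intro β
      have e1 : ∀ m, gt β m * D m i j
          = g β m * D m i j - ∑ p, ∑ q, hinv p q * A p β * (A q m * D m i j) := by
        intro m
        rw [hgt, sub_mul, Finset.sum_mul]
        congr 1
        apply Finset.sum_congr rfl; intro p _
        rw [Finset.sum_mul]
        apply Finset.sum_congr rfl; intro q _
        ring
      have e2 : ∑ m, gt β m * D m i j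
          = (∑ m, g β m * D m i j)
            - ∑ p, ∑ q, hinv p q * A p β * (∑ m, A q m * D m i j) := by
        calc ∑ m, gt β m * D m i j
            = ∑ m, (g β m * D m i j - ∑ p, ∑ q, hinv p q * A p β * (A q m * D m i j)) :=
              Finset.sum_congr rfl (fun m _ => e1 m)
          _ = (∑ m, g β m * D m i j)
              - ∑ m, ∑ p, ∑ q, hinv p q * A p β * (A q m * D m i j) :=
              Finset.sum_sub_distrib _ _
          _ = (∑ m, g β m * D m i j)
              - ∑ p, ∑ q, ∑ m, hinv p q * A p β * (A q m * D m i j) := by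
              rw [sum_rotate]
          _ = (∑ m, g β m * D m i j)
              - ∑ p, ∑ q, hinv p q * A p β * (∑ m, A q m * D m i j) := by
              congr 1
              apply Finset.sum_congr rfl; intro p _
              apply Finset.sum_congr rfl; intro q _
              rw [Finset.mul_sum]
      rw [e2, hgD β]
      have f1 : ∑ p, ∑ q, hinv p q * A p β * (∑ m, A q m * D m i j)
          = (-(1/2)) * (∑ p, ∑ q, hinv p q * A p β * (∑ l, h q l * eps l i j))
            + (1/2) * (∑ p, ∑ q, hinv p q * A p β * (∑ l, h i l * eps l j q))
            + (-(1/2)) * (∑ p, ∑ q, hinv p q * A p β * (∑ l, h j l * eps l q i))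
            - ∑ p, ∑ q, hinv p q * A p β * (∑ c, h q c * H c i j) := by
        have ptw : ∀ p q, hinv p q * A p β * (∑ m, A q m * D m i j)
            = (-(1/2)) * (hinv p q * A p β * (∑ l, h q l * eps l i j))
              + (1/2) * (hinv p q * A p β * (∑ l, h i l * eps l j q))
              + (-(1/2)) * (hinv p q * A p β * (∑ l, h j l * eps l q i))
              - hinv p q * A p β * (∑ c, h q c * H c i j) := by
          intro p q; rw [heD q]; ring
        simp_rw [ptw]
        simp only [Finset.sum_add_distrib, Finset.sum_sub_distrib, ← Finset.mul_sum]
      have f2 : ∑ p, ∑ q, hinv p q * A p β * (∑ c, h q c * H c i j)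
          = ∑ c, A c β * H c i j := by
        have ptw : ∀ p, ∑ q, hinv p q * A p β * (∑ c, h q c * H c i j)
            = A p β * ∑ q, ∑ c, hinv p q * (h q c * H c i j) := by
          intro p
          rw [Finset.mul_sum]
          apply Finset.sum_congr rfl; intro q _
          rw [Finset.mul_sum, Finset.mul_sum]
          apply Finset.sum_congr rfl; intro c _
          ring
        calc ∑ p, ∑ q, hinv p q * A p β * (∑ c, h q c * H c i j)
            = ∑ p, A p β * ∑ q, ∑ c, hinv p q * (h q c * H c i j) :=
              Finset.sum_congr rfl (fun p _ => ptw p)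
          _ = ∑ p, A p β * H p i j := by
              apply Finset.sum_congr rfl; intro p _
              rw [contract_vec2 hinv h hh_inv' (fun c => H c i j) p]
      have f3 : ∑ p, ∑ q, hinv p q * A p β * (∑ l, h q l * eps l i j)
          = ∑ l, A l β * eps l i j := by
        have ptw : ∀ p, ∑ q, hinv p q * A p β * (∑ l, h q l * eps l i j)
            = A p β * ∑ q, ∑ l, hinv p q * (h q l * eps l i j) := by
          intro p
          rw [Finset.mul_sum]
          apply Finset.sum_congr rfl; intro q _
          rw [Finset.mul_sum, Finset.mul_sum]
          apply Finset.sum_congr rfl; intro l _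
          ring
        calc ∑ p, ∑ q, hinv p q * A p β * (∑ l, h q l * eps l i j)
            = ∑ p, A p β * ∑ q, ∑ l, hinv p q * (h q l * eps l i j) :=
              Finset.sum_congr rfl (fun p _ => ptw p)
          _ = ∑ p, A p β * eps p i j := by
              apply Finset.sum_congr rfl; intro p _
              rw [contract_vec2 hinv h hh_inv' (fun l => eps l i j) p]
      have f5 : ∑ k, ∑ m0, A k β * hinv m0 k *
            ((∑ n', h n' i * eps j m0 n') + ∑ n', h n' j * eps i m0 n')
          = (∑ p, ∑ q, hinv p q * A p β * (∑ l, h i l * eps l j q))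
            - ∑ p, ∑ q, hinv p q * A p β * (∑ l, h j l * eps l q i) := by
        rw [← Finset.sum_sub_distrib]
        apply Finset.sum_congr rfl; intro p _
        rw [← Finset.sum_sub_distrib]
        apply Finset.sum_congr rfl; intro q _
        have e : ∑ n', h n' i * eps j q n' = ∑ l, h i l * eps l j q := by
          apply Finset.sum_congr rfl; intro l _
          rw [hh_symm l i, ← eps_cyc l j q]
        have e' : ∑ n', h n' j * eps i q n' = - ∑ l, h j l * eps l q i := by
          rw [← Finset.sum_neg_distrib]
          apply Finset.sum_congr rfl; intro l _
          rw [hh_symm l j, eps_swap13 i q l]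
          ring
        rw [e, e', hhinv_symm p q]
        ring
      linarith [f1, f2, f3, f5]
    rw [inv_solve gt gtinv hgt_inv' (fun m => D m i j) _ hcon μ', Finset.mul_sum]
    apply Finset.sum_congr rfl; intro α _
    ring
  -- the H formula
  have hHc : ∀ l' i k, H l' i k = (1/2) * (∑ j, ht j l' *
      ((∑ n', h n' i * eps k j n') + (∑ n', h n' k * eps i j n')
        - ∑ μ, ∑ α, A j μ * ginv μ α * Dh α i k)) - (1/2) * eps l' i k := by
    intro l' i k
    have hvD : ∀ β, ∑ m, g β m * D m i k
        = (1/2) * (Dh β i k - ∑ l, A l β * eps l i k) - ∑ c, A c β * H c i k := by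
      intro β
      have e : ∑ μ, g μ β * D μ i k = ∑ μ, g β μ * D μ i k :=
        Finset.sum_congr rfl (fun μ _ => by rw [hg_symm])
      linarith [hV β i k]
    have hDg : ∀ ν, D ν i k = ∑ β, ginv ν β *
        ((1/2) * (Dh β i k - ∑ l, A l β * eps l i k) - ∑ c, A c β * H c i k) :=
      fun ν => inv_solve g ginv hg_inv' (fun m => D m i k) _ hvD ν
    have hcon : ∀ m, ∑ c, (h m c - ∑ μ, ∑ β, A m μ * ginv μ β * A c β)
          * (H c i k + (1/2) * eps c i k)
        = (1/2) * ((∑ n', h n' i * eps k m n') + (∑ n', h n' k * eps i m n')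
            - ∑ μ, ∑ α, A m μ * ginv μ α * Dh α i k) := by
      intro m
      have hRm := hR m i k
      have eT : ∑ μ, A m μ * D μ i k
          = (∑ μ, ∑ β, A m μ * (ginv μ β *
              ((1/2) * (Dh β i k - ∑ l, A l β * eps l i k))))
            - ∑ μ, ∑ β, ∑ c, A m μ * (ginv μ β * (A c β * H c i k)) := by
        rw [← Finset.sum_sub_distrib]
        apply Finset.sum_congr rfl; intro μ _
        rw [hDg μ, ← Finset.sum_sub_distrib, Finset.mul_sum]
        apply Finset.sum_congr rfl; intro β _
        rw [mul_sub_sum, mul_sub_sum]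
      have eS2 : ∑ μ, ∑ β, ∑ c, A m μ * (ginv μ β * (A c β * H c i k))
          = ∑ c, (∑ μ, ∑ β, A m μ * ginv μ β * A c β) * H c i k := by
        rw [sum_rotate, sum_rotate]
        apply Finset.sum_congr rfl; intro c _
        rw [Finset.sum_mul]
        apply Finset.sum_congr rfl; intro μ _
        rw [Finset.sum_mul]
        apply Finset.sum_congr rfl; intro β _
        ring
      have eX : ∑ μ, ∑ β, A m μ * (ginv μ β *
              ((1/2) * (Dh β i k - ∑ l, A l β * eps l i k)))
          = (1/2) * (∑ μ, ∑ β, A m μ * (ginv μ β * Dh β i k))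
            - (1/2) * (∑ μ, ∑ β, ∑ l, A m μ * (ginv μ β * (A l β * eps l i k))) := by
        have ptw : ∀ μ β, A m μ * (ginv μ β * ((1/2) * (Dh β i k - ∑ l, A l β * eps l i k)))
            = (1/2) * (A m μ * (ginv μ β * Dh β i k))
              - (1/2) * (∑ l, A m μ * (ginv μ β * (A l β * eps l i k))) := by
          intro μ β
          have e : A m μ * (ginv μ β * (∑ l, A l β * eps l i k))
              = ∑ l, A m μ * (ginv μ β * (A l β * eps l i k)) := by
            rw [Finset.mul_sum, Finset.mul_sum]
          rw [← e]; ring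
        simp_rw [ptw]
        simp only [Finset.sum_sub_distrib, ← Finset.mul_sum]
      have eW2 : ∑ c, (∑ μ, ∑ β, A m μ * ginv μ β * A c β) * eps c i k
          = ∑ μ, ∑ β, ∑ l, A m μ * (ginv μ β * (A l β * eps l i k)) := by
        rw [sum_rotate, sum_rotate]
        apply Finset.sum_congr rfl; intro c _
        rw [Finset.sum_mul]
        apply Finset.sum_congr rfl; intro μ _
        rw [Finset.sum_mul]
        apply Finset.sum_congr rfl; intro β _
        ring
      have lsplit : ∑ c, (h m c - ∑ μ, ∑ β, A m μ * ginv μ β * A c β)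
            * (H c i k + (1/2) * eps c i k)
          = (∑ c, h m c * H c i k)
            - (∑ c, (∑ μ, ∑ β, A m μ * ginv μ β * A c β) * H c i k)
            + (1/2) * (∑ c, h m c * eps c i k)
            - (1/2) * (∑ c, (∑ μ, ∑ β, A m μ * ginv μ β * A c β) * eps c i k) := by
        have ptw : ∀ c, (h m c - ∑ μ, ∑ β, A m μ * ginv μ β * A c β)
              * (H c i k + (1/2) * eps c i k)
            = h m c * H c i k
              - (∑ μ, ∑ β, A m μ * ginv μ β * A c β) * H c i k
              + (1/2) * (h m c * eps c i k)
              - (1/2) * ((∑ μ, ∑ β, A m μ * ginv μ β * A c β) * eps c i k) := by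
          intro c; ring
        simp_rw [ptw]
        simp only [Finset.sum_add_distrib, Finset.sum_sub_distrib, ← Finset.mul_sum]
      have em3 : ∑ l, h i l * eps l k m = ∑ n', h n' i * eps k m n' := by
        apply Finset.sum_congr rfl; intro l _
        rw [hh_symm i l, eps_cyc l k m]
      have em4 : ∑ l, h k l * eps l m i = - ∑ n', h n' k * eps i m n' := by
        rw [← Finset.sum_neg_distrib]
        apply Finset.sum_congr rfl; intro l _
        rw [hh_symm k l, eps_swap13 i m l]
        ring
      have em5 : ∑ μ, ∑ β, A m μ * (ginv μ β * Dh β i k)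
          = ∑ μ, ∑ α, A m μ * ginv μ α * Dh α i k := by
        apply Finset.sum_congr rfl; intro μ _
        apply Finset.sum_congr rfl; intro β _
        ring
      rw [lsplit]
      linarith [hRm, eT, eS2, eX, eW2, em3, em4, em5]
    have key := inv_solve (fun m c => h m c - ∑ μ, ∑ β, A m μ * ginv μ β * A c β) ht hwood
      (fun c => H c i k + (1/2) * eps c i k)
      (fun m => (1/2) * ((∑ n', h n' i * eps k m n') + (∑ n', h n' k * eps i m n')
          - ∑ μ, ∑ α, A m μ * ginv μ α * Dh α i k)) hcon l'
    have e : ∑ m, ht l' m * ((1/2) * ((∑ n', h n' i * eps k m n')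
          + (∑ n', h n' k * eps i m n') - ∑ μ, ∑ α, A m μ * ginv μ α * Dh α i k))
        = (1/2) * ∑ j, ht j l' * ((∑ n', h n' i * eps k j n')
          + (∑ n', h n' k * eps i j n') - ∑ μ, ∑ α, A j μ * ginv μ α * Dh α i k) := by
      rw [Finset.mul_sum]
      apply Finset.sum_congr rfl; intro m _
      rw [hht_symm l' m]
      ring
    rw [e] at key
    linarith [key]
  -- the Γ formula
  have hGc : ∀ σ μ ν, Γ σ μ ν = Γt σ μ ν + (1/2) * ∑ ρ, gtinv σ ρ *
      ((∑ i, A i μ * (C ν ρ i - C ρ ν i)) + (∑ i, A i ν * (C μ ρ i - C ρ μ i))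
        - ∑ i, ∑ j, ∑ k, ∑ l, A i μ * A j ν * hinv i k * hinv j l * Dh ρ k l) := by
    -- step 1: contracted first equation with E eliminated
    have hW : ∀ x y z, (∑ m, gt z m * Γ m x y) + (∑ m, gt y m * Γ m x z)
        = (Dg x y z - (1/2) * ∑ i, ∑ j, hinv i j * (A i z * (DA x j y + DA y j x) + A i y * (DA x j z + DA z j x))) := by
      intro x y z
      have h1 := heq1 x y z
      have eE : ∀ y' z', ∑ i, A i z' * E i x y'
          = (∑ m, (∑ i, ∑ j, hinv i j * A i z' * A j m) * Γ m x y')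
            - (1/2) * ∑ i, ∑ j, hinv i j * (A i z' * (DA x j y' + DA y' j x)) := by
        intro y' z'
        have t1 : ∀ i0, A i0 z' * E i0 x y'
            = (∑ j, ∑ m, (hinv i0 j * A i0 z' * A j m) * Γ m x y')
              - ∑ j, (1/2) * (hinv i0 j * (A i0 z' * (DA x j y' + DA y' j x))) := by
          intro i0
          rw [hEc i0 x y', Finset.mul_sum, Finset.mul_sum, ← Finset.sum_sub_distrib]
          apply Finset.sum_congr rfl; intro j _
          have e : ∑ m, (hinv i0 j * A i0 z' * A j m) * Γ m x y'
              = (hinv i0 j * A i0 z') * ∑ m, A j m * Γ m x y' := by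
            rw [Finset.mul_sum]
            apply Finset.sum_congr rfl; intro m _
            ring
          rw [e]; ring
        calc ∑ i, A i z' * E i x y'
            = ∑ i, ((∑ j, ∑ m, (hinv i j * A i z' * A j m) * Γ m x y')
              - ∑ j, (1/2) * (hinv i j * (A i z' * (DA x j y' + DA y' j x)))) :=
              Finset.sum_congr rfl (fun i _ => t1 i)
          _ = (∑ i, ∑ j, ∑ m, (hinv i j * A i z' * A j m) * Γ m x y')
              - ∑ i, ∑ j, (1/2) * (hinv i j * (A i z' * (DA x j y' + DA y' j x))) :=
              Finset.sum_sub_distrib _ _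
          _ = (∑ m, (∑ i, ∑ j, hinv i j * A i z' * A j m) * Γ m x y')
              - (1/2) * ∑ i, ∑ j, hinv i j * (A i z' * (DA x j y' + DA y' j x)) := by
              congr 1
              · rw [sum_rotate, sum_rotate]
                apply Finset.sum_congr rfl; intro m _
                rw [Finset.sum_mul]
                apply Finset.sum_congr rfl; intro i _
                rw [Finset.sum_mul]
              · rw [Finset.mul_sum]
                apply Finset.sum_congr rfl; intro i _
                rw [Finset.mul_sum]
      have egt : ∀ y' z', ∑ m, gt z' m * Γ m x y'
          = (∑ m, g z' m * Γ m x y')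
            - ∑ m, (∑ i, ∑ j, hinv i j * A i z' * A j m) * Γ m x y' := by
        intro y' z'
        rw [← Finset.sum_sub_distrib]
        apply Finset.sum_congr rfl; intro m _
        rw [hgt]; ring
      have e4 : ∑ m, g m z * Γ m x y = ∑ m, g z m * Γ m x y :=
        Finset.sum_congr rfl (fun m _ => by rw [hg_symm])
      have eQ : ∑ i, ∑ j, hinv i j *
            (A i z * (DA x j y + DA y j x) + A i y * (DA x j z + DA z j x))
          = (∑ i, ∑ j, hinv i j * (A i z * (DA x j y + DA y j x)))
            + ∑ i, ∑ j, hinv i j * (A i y * (DA x j z + DA z j x)) := by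
        rw [← Finset.sum_add_distrib]
        apply Finset.sum_congr rfl; intro i _
        rw [← Finset.sum_add_distrib]
        apply Finset.sum_congr rfl; intro j _
        ring
      linarith [h1, eE y z, eE z y, egt y z, egt z y, e4, eQ]
    -- step 2: Christoffel inversion
    intro σ' a b
    have eG : ∀ x y z, ∑ m, gt z m * Γ m x y = ∑ m, gt z m * Γ m y x :=
      fun x y z => Finset.sum_congr rfl (fun m _ => by rw [hΓ_symm])
    have hChr : ∀ ρ, ∑ m, gt ρ m * Γ m a b
        = (1/2) * ((Dg a b ρ - (1/2) * ∑ i, ∑ j, hinv i j * (A i ρ * (DA a j b + DA b j a) + A i b * (DA a j ρ + DA ρ j a))) + (Dg b a ρ - (1/2) * ∑ i, ∑ j, hinv i j * (A i ρ * (DA b j a + DA a j b) + A i a * (DA b j ρ + DA ρ j b))) - (Dg ρ a b - (1/2) * ∑ i, ∑ j, hinv i j * (A i b * (DA ρ j a + DA a j ρ) + A i a * (DA ρ j b + DA b j ρ)))) := by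
      intro ρ
      linarith [hW a b ρ, hW b a ρ, hW ρ a b, eG a b ρ, eG a ρ b, eG b ρ a]
    have hsol := inv_solve gt gtinv hgt_inv' (fun m => Γ m a b)
      (fun ρ => (1/2) * ((Dg a b ρ - (1/2) * ∑ i, ∑ j, hinv i j * (A i ρ * (DA a j b + DA b j a) + A i b * (DA a j ρ + DA ρ j a))) + (Dg b a ρ - (1/2) * ∑ i, ∑ j, hinv i j * (A i ρ * (DA b j a + DA a j b) + A i a * (DA b j ρ + DA ρ j b))) - (Dg ρ a b - (1/2) * ∑ i, ∑ j, hinv i j * (A i b * (DA ρ j a + DA a j ρ) + A i a * (DA ρ j b + DA b j ρ))))) hChr σ'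
    rw [hsol, hΓt σ' a b]
    have hs10 : hinv 1 0 = hinv 0 1 := hhinv_symm 1 0
    have hs20 : hinv 2 0 = hinv 0 2 := hhinv_symm 2 0
    have hs21 : hinv 2 1 = hinv 1 2 := hhinv_symm 2 1
    have hd10 : ∀ w, Dh w 1 0 = Dh w 0 1 := fun w => hDh_symm w 1 0
    have hd20 : ∀ w, Dh w 2 0 = Dh w 0 2 := fun w => hDh_symm w 2 0
    have hd21 : ∀ w, Dh w 2 1 = Dh w 1 2 := fun w => hDh_symm w 2 1
    have hId : ∀ ρ, (1/2) * ((Dg a b ρ - (1/2) * ∑ i, ∑ j, hinv i j * (A i ρ * (DA a j b + DA b j a) + A i b * (DA a j ρ + DA ρ j a))) + (Dg b a ρ - (1/2) * ∑ i, ∑ j, hinv i j * (A i ρ * (DA b j a + DA a j b) + A i a * (DA b j ρ + DA ρ j b))) - (Dg ρ a b - (1/2) * ∑ i, ∑ j, hinv i j * (A i b * (DA ρ j a + DA a j ρ) + A i a * (DA ρ j b + DA b j ρ))))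
        = (1/2) * (Dgt a b ρ + Dgt b a ρ - Dgt ρ a b)
          + (1/2) * ((∑ i, A i a * (C b ρ i - C ρ b i))
            + (∑ i, A i b * (C a ρ i - C ρ a i))
            - ∑ i, ∑ j, ∑ k, ∑ l, A i a * A j b * hinv i k * hinv j l * Dh ρ k l) := by
      intro ρ
      simp only [hC, hDgt, Fin.sum_univ_three, hs10, hs20, hs21, hd10, hd20, hd21]
      ring
    rw [Finset.mul_sum, Finset.mul_sum, ← Finset.sum_add_distrib]
    apply Finset.sum_congr rfl; intro ρ _
    linear_combination (gtinv σ' ρ) * hId ρ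

  exact ⟨hEc, hFc, hBc, hDc, hHc, hGc⟩
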